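/- For all k ∈ ℤ with k ≠ 0, all η ∈ ℝ, and all t ≥ 0: ∫₀ᵗ (k² + (η - ks)²) ds ≥ k² t³ / 12. -/

import Mathlib

/-- The key uniform-in-`η` lower bound behind the enhanced dissipation time-scale
`ν^(-1/3)`: for `k ≠ 0`, `∫₀ᵗ (k² + (η - ks)²) ds ≥ k² t³ / 12` for all `t ≥ 0`. -/
theorem stmt_3 (k : ℤ) (hk : k ≠ 0) (η : ℝ) (t : ℝ) (ht : 0 ≤ t) :
    (k:ℝ)^2 * t^3 / 12 ≤ ∫ s in (0:ℝ)..t, ((k:ℝ)^2 + (η - k*s)^2) := by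
  have h : ∫ s in (0:ℝ)..t, ((k:ℝ)^2 + (η - k*s)^2)
      = (fun s => ((k:ℝ)^2 + η^2) * s - η * k * s^2 + (k:ℝ)^2 * s^3 / 3) t
      - (fun s => ((k:ℝ)^2 + η^2) * s - η * k * s^2 + (k:ℝ)^2 * s^3 / 3) 0 := by
    apply intervalIntegral.integral_eq_sub_of_hasDerivAt
      (f := fun s => ((k:ℝ)^2 + η^2) * s - η * k * s^2 + (k:ℝ)^2 * s^3 / 3)
    · intro s _
      have : HasDerivAt (fun s => ((k:ℝ)^2 + η^2) * s - η * k * s^2 + (k:ℝ)^2 * s^3 / 3)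
          (((k:ℝ)^2 + η^2) * 1 - η * k * (2 * s^1) + (k:ℝ)^2 * (3 * s^2) / 3) s := by
        exact (((hasDerivAt_id s).const_mul _).sub
          (((hasDerivAt_pow 2 s)).const_mul _)).add
          (((hasDerivAt_pow 3 s)).const_mul _ |>.div_const 3)
      refine this.congr_deriv ?_
      ring
    · exact (Continuous.intervalIntegrable (by continuity) _ _)
  simp only [] at h
  norm_num at h
  rw [h]
  have hk2 : (0:ℝ) ≤ (k:ℝ)^2 * t := by positivity
  nlinarith [mul_nonneg ht (sq_nonneg (η - k * t / 2))]
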